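/- Let G be a finite connected graph with a vertex v of degree 1, and let v' be the unique neighbour of v. Then the map sending an orientation O of G to its restriction to G \ {v} gives a bijection between the v-rooted acyclic orientations of G and the v'-rooted acyclic orientations of G \ {v}. -/

import Mathlib

/-- An acyclic orientation of a simple graph: each edge gets exactly one direction,
and there are no directed cycles. -/
structure AcyclicOrientation {V : Type*} (G : SimpleGraph V) where
  dir : V → V → Prop
  adj_of_dir : ∀ a b, dir a b → G.Adj a b
  total : ∀ a b, G.Adj a b → dir a b ∨ dir b a
  asymm : ∀ a b, dir a b → ¬ dir b a
  acyclic : ∀ v, ¬ Relation.TransGen dir v v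

/-- `s` is a target: all incident edges are directed towards `s`. -/
def AcyclicOrientation.IsTarget {V : Type*} {G : SimpleGraph V}
    (o : AcyclicOrientation G) (s : V) : Prop :=
  ∀ a, G.Adj a s → o.dir a s

/-- `s` is a source: all incident edges are directed away from `s`. -/
def AcyclicOrientation.IsSource {V : Type*} {G : SimpleGraph V}
    (o : AcyclicOrientation G) (s : V) : Prop :=
  ∀ a, G.Adj s a → o.dir s a

/-- An `s`-rooted acyclic orientation: `s` is the unique target. -/
def AcyclicOrientation.IsRooted {V : Type*} {G : SimpleGraph V}
    (o : AcyclicOrientation G) (s : V) : Prop :=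
  o.IsTarget s ∧ ∀ t, o.IsTarget t → t = s

/-- The number of `s`-rooted acyclic orientations of `G`. -/
noncomputable def rootedCount {V : Type*} (G : SimpleGraph V) (s : V) : ℕ :=
  Nat.card {o : AcyclicOrientation G // o.IsRooted s}


section Aux

variable {V : Type*} {G : SimpleGraph V} {v : V}

theorem AO_ext {o1 o2 : AcyclicOrientation G}
    (h : ∀ a b, o1.dir a b ↔ o2.dir a b) : o1 = o2 := by
  cases o1 with
  | mk d1 p1 q1 r1 s1 =>
    cases o2 with
    | mk d2 p2 q2 r2 s2 =>
      have hd : d1 = d2 := funext fun a => funext fun b => propext (h a b)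
      subst hd
      rfl

/-- direction relation of the extension of an orientation of `G \ {v}` to `G`,
with all edges at `v` oriented into `v`. -/
def extDir (o' : AcyclicOrientation (G.induce {u | u ≠ v})) (a b : V) : Prop :=
  (b = v ∧ G.Adj a v) ∨ ∃ (ha : a ≠ v) (hb : b ≠ v), o'.dir ⟨a, ha⟩ ⟨b, hb⟩

theorem extDir_ne {o' : AcyclicOrientation (G.induce {u | u ≠ v})} {a b : V}
    (h : extDir o' a b) : a ≠ v := by
  rcases h with ⟨hbv, hab⟩ | ⟨ha, hb, hd⟩
  · exact fun hav => G.irrefl (hav ▸ hab)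
  · exact ha

theorem extDir_transGen_ne {o' : AcyclicOrientation (G.induce {u | u ≠ v})} {a b : V}
    (h : Relation.TransGen (extDir o') a b) : a ≠ v := by
  induction h with
  | single h => exact extDir_ne h
  | tail h1 h2 ih => exact ih

theorem extDir_transGen {o' : AcyclicOrientation (G.induce {u | u ≠ v})} {a b : V}
    (h : Relation.TransGen (extDir o') a b) :
    ∀ (hb : b ≠ v), ∃ (ha : a ≠ v), Relation.TransGen o'.dir ⟨a, ha⟩ ⟨b, hb⟩ := by
  induction h with
  | single h =>
    intro hb
    rcases h with ⟨hbv, _⟩ | ⟨ha, hb', hd⟩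
    · exact absurd hbv hb
    · exact ⟨ha, Relation.TransGen.single hd⟩
  | tail h1 h2 ih =>
    intro hb
    rcases h2 with ⟨hbv, _⟩ | ⟨hc, hb', hd⟩
    · exact absurd hbv hb
    · obtain ⟨ha, ht⟩ := ih hc
      exact ⟨ha, ht.tail hd⟩

/-- The extension of an acyclic orientation of `G \ {v}` to `G`. -/
def extAO (o' : AcyclicOrientation (G.induce {u | u ≠ v})) : AcyclicOrientation G where
  dir := extDir o'
  adj_of_dir a b h := by
    rcases h with ⟨hbv, hab⟩ | ⟨ha, hb, hd⟩
    · exact hbv ▸ hab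
    · exact o'.adj_of_dir _ _ hd
  total a b hab := by
    by_cases hb : b = v
    · exact Or.inl (Or.inl ⟨hb, hb ▸ hab⟩)
    · by_cases ha : a = v
      · exact Or.inr (Or.inl ⟨ha, ha ▸ hab.symm⟩)
      · rcases o'.total ⟨a, ha⟩ ⟨b, hb⟩ hab with h | h
        · exact Or.inl (Or.inr ⟨ha, hb, h⟩)
        · exact Or.inr (Or.inr ⟨hb, ha, h⟩)
  asymm a b h1 h2 := by
    rcases h1 with ⟨hbv, hab⟩ | ⟨ha, hb, hd⟩
    · rcases h2 with ⟨hav, hba⟩ | ⟨hb, ha, hd⟩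
      · exact G.irrefl (hav ▸ hab)
      · exact hb hbv
    · rcases h2 with ⟨hav, hba⟩ | ⟨hb', ha', hd'⟩
      · exact ha hav
      · exact o'.asymm _ _ hd hd'
  acyclic x hx := by
    have hxv : x ≠ v := extDir_transGen_ne hx
    obtain ⟨ha, ht⟩ := extDir_transGen hx hxv
    exact o'.acyclic _ ht

end Aux

/-- If `v` has degree 1 with unique neighbour `v'`, then restriction of orientations
gives a bijection between `v`-rooted acyclic orientations of `G` and `v'`-rooted
acyclic orientations of `G \ {v}`. -/
theorem degree_one_rooted_orientation_equiv {V : Type*} [Fintype V] [DecidableEq V]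
    (G : SimpleGraph V) [DecidableRel G.Adj] (hG : G.Connected) (v v' : V)
    (hdeg : G.degree v = 1) (hadj : G.Adj v v') :
    ∃ e : {o : AcyclicOrientation G // o.IsRooted v} ≃
        {o' : AcyclicOrientation (G.induce {u | u ≠ v}) // o'.IsRooted ⟨v', hadj.ne'⟩},
      ∀ (o : {o : AcyclicOrientation G // o.IsRooted v}) (a b : {u | u ≠ v}),
        (e o).1.dir a b ↔ o.1.dir ↑a ↑b := by
  classical
  -- the unique neighbour of `v`
  have huniq : ∀ a, G.Adj a v → a = v' := by
    intro a ha
    have h1 : a ∈ G.neighborFinset v := by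
      rw [SimpleGraph.mem_neighborFinset]; exact ha.symm
    have h2 : v' ∈ G.neighborFinset v := by
      rw [SimpleGraph.mem_neighborFinset]; exact hadj
    have hle : (G.neighborFinset v).card ≤ 1 := le_of_eq hdeg
    exact Finset.card_le_one.mp hle _ h1 _ h2
  -- rooted orientations of G have no edge out of v
  have hnoout : ∀ (o : AcyclicOrientation G), o.IsRooted v → ∀ b, ¬ o.dir v b := by
    intro o ho b hb
    have hadjvb : G.Adj v b := o.adj_of_dir _ _ hb
    exact o.asymm _ _ (ho.1 b hadjvb.symm) hb
  -- restriction of a v-rooted orientation is an acyclic orientation of G \ {v}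
  let res : ∀ o : AcyclicOrientation G, o.IsRooted v →
      AcyclicOrientation (G.induce {u | u ≠ v}) := fun o ho =>
    { dir := fun a b => o.dir a b
      adj_of_dir := fun a b h => o.adj_of_dir _ _ h
      total := fun a b h => o.total _ _ h
      asymm := fun a b h1 h2 => o.asymm _ _ h1 h2
      acyclic := fun x hx => o.acyclic ↑x
        (Relation.TransGen.lift (Subtype.val) (fun a b h => h) _ _ hx) }
  -- any target of the restriction is v'
  have htgt : ∀ (o : AcyclicOrientation G) (ho : o.IsRooted v)
      (t : {u | u ≠ v}), (res o ho).IsTarget t → t = ⟨v', hadj.ne'⟩ := by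
    intro o ho t ht
    by_contra hne
    have htv' : (t : V) ≠ v' := fun h => hne (Subtype.ext h)
    have : o.IsTarget ↑t := by
      intro a ha
      by_cases hav : a = v
      · subst hav
        exact absurd (huniq _ ha.symm) htv'
      · exact ht ⟨a, hav⟩ ha
    exact t.2 (ho.2 _ this)
  -- the restriction is v'-rooted
  have hres_rooted : ∀ (o : AcyclicOrientation G) (ho : o.IsRooted v),
      (res o ho).IsRooted ⟨v', hadj.ne'⟩ := by
    intro o ho
    constructor
    · -- there exists a target (maximal element), which must be v'
      have hwf : WellFounded (fun x y : {u | u ≠ v} =>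
          Relation.TransGen (res o ho).dir y x) := by
        have : IsTrans {u | u ≠ v} (fun x y =>
            Relation.TransGen (res o ho).dir y x) :=
          ⟨fun a b c h1 h2 => h2.trans h1⟩
        have : IsIrrefl {u | u ≠ v} (fun x y =>
            Relation.TransGen (res o ho).dir y x) :=
          ⟨fun a h => (res o ho).acyclic a h⟩
        exact Finite.wellFounded_of_trans_of_irrefl _
      obtain ⟨m, -, hm⟩ := hwf.has_min Set.univ ⟨⟨v', hadj.ne'⟩, trivial⟩
      have hm' : (res o ho).IsTarget m := by
        intro a ha
        rcases (res o ho).total a m ha with h | h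
        · exact h
        · exact absurd (Relation.TransGen.single h) (hm a trivial)
      have := htgt o ho m hm'
      exact this ▸ hm'
    · exact fun t ht => htgt o ho t ht
  -- the extension is v-rooted
  have hext_rooted : ∀ (o' : AcyclicOrientation (G.induce {u | u ≠ v})),
      o'.IsRooted ⟨v', hadj.ne'⟩ → (extAO o').IsRooted v := by
    intro o' ho'
    constructor
    · intro a ha
      exact Or.inl ⟨rfl, ha⟩
    · intro t ht
      by_contra htv
      have hvt : ¬ G.Adj v t := by
        intro h
        exact extDir_ne (ht v h) rfl
      have htv' : (⟨t, htv⟩ : {u | u ≠ v}) ≠ ⟨v', hadj.ne'⟩ := by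
        intro h
        have h2 : t = v' := congrArg Subtype.val h
        exact hvt (by rw [h2]; exact hadj)
      apply htv'
      apply ho'.2
      intro a ha
      rcases ht ↑a ha with ⟨htv2, _⟩ | ⟨ha', ht', hd⟩
      · exact absurd htv2 htv
      · exact hd
  -- the forward and backward maps are mutually inverse
  let F : {o : AcyclicOrientation G // o.IsRooted v} →
      {o' : AcyclicOrientation (G.induce {u | u ≠ v}) // o'.IsRooted ⟨v', hadj.ne'⟩} :=
    fun o => ⟨res o.1 o.2, hres_rooted o.1 o.2⟩
  let B : {o' : AcyclicOrientation (G.induce {u | u ≠ v}) // o'.IsRooted ⟨v', hadj.ne'⟩} →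
      {o : AcyclicOrientation G // o.IsRooted v} :=
    fun o' => ⟨extAO o'.1, hext_rooted o'.1 o'.2⟩
  refine ⟨⟨F, B, ?_, ?_⟩, fun o a b => Iff.rfl⟩
  · rintro ⟨o, ho⟩
    refine Subtype.ext (AO_ext ?_)
    intro a b
    show extDir (res o ho) a b ↔ o.dir a b
    constructor
    · rintro (⟨hbv, hab⟩ | ⟨ha, hb, hd⟩)
      · exact hbv ▸ ho.1 a (hbv ▸ hab)
      · exact hd
    · intro h
      by_cases hb : b = v
      · exact Or.inl ⟨hb, hb ▸ o.adj_of_dir _ _ h⟩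
      · have ha : a ≠ v := fun hav => hnoout o ho b (hav ▸ h)
        exact Or.inr ⟨ha, hb, h⟩
  · rintro ⟨o', ho'⟩
    refine Subtype.ext (AO_ext ?_)
    intro a b
    show extDir o' ↑a ↑b ↔ o'.dir a b
    constructor
    · rintro (⟨hbv, hab⟩ | ⟨ha, hb, hd⟩)
      · exact absurd hbv b.2
      · exact hd
    · intro h
      exact Or.inr ⟨a.2, b.2, h⟩
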